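/- Let n ≥ 1 and let c_1, …, c_σ be positive integers with c_1 + ⋯ + c_σ = n, and let H = Σ_{j=1}^σ (c_j/n)·log₂(n/c_j). Then log₂( n! / (c_1!·c_2!·⋯·c_σ!) ) ≥ n·H − σ·log₂(n/σ) − 2σ. -/

import Mathlib

open Real Finset

private lemma key_ratio (k : ℕ) (hk : 1 ≤ k) :
    ((k : ℝ) + 1) ^ k ≤ (k : ℝ) ^ k * Real.exp 1 := by
  have hk0 : (0:ℝ) < k := by exact_mod_cast hk
  have h1 : (k : ℝ) + 1 ≤ k * Real.exp (1 / k) := by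
    have h := Real.add_one_le_exp (1 / (k:ℝ))
    have := mul_le_mul_of_nonneg_left h hk0.le
    have hne : (k:ℝ) ≠ 0 := hk0.ne'
    calc (k:ℝ) + 1 = (k:ℝ) * (1/(k:ℝ) + 1) := by field_simp; ring
    _ ≤ (k:ℝ) * Real.exp (1/(k:ℝ)) := this
  calc ((k:ℝ)+1)^k ≤ ((k:ℝ) * Real.exp (1/(k:ℝ)))^k := by
        apply pow_le_pow_left₀ (by positivity) h1
  _ = (k:ℝ)^k * Real.exp (1/(k:ℝ)) ^ k := by rw [mul_pow]
  _ = (k:ℝ)^k * Real.exp 1 := by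
        rw [← Real.exp_nat_mul]
        congr 1
        field_simp

private lemma key_ratio2 (k : ℕ) (hk : 1 ≤ k) :
    (k : ℝ) ^ (k+1) * Real.exp 1 ≤ ((k : ℝ) + 1) ^ (k+1) := by
  have hk0 : (0:ℝ) < k := by exact_mod_cast hk
  have hk1 : (0:ℝ) < (k:ℝ) + 1 := by positivity
  set E := Real.exp (1 / ((k:ℝ)+1)) with hE
  have hEpos : 0 < E := Real.exp_pos _
  have h : (1 : ℝ) - 1/((k:ℝ)+1) ≤ E⁻¹ := by
    have := Real.add_one_le_exp (-(1/((k:ℝ)+1)))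
    rwa [Real.exp_neg, neg_add_eq_sub] at this
  have h2 : (k:ℝ) * E ≤ (k:ℝ) + 1 := by
    have h' := mul_le_mul_of_nonneg_right h hEpos.le
    rw [inv_mul_cancel₀ hEpos.ne'] at h'
    have h'' := mul_le_mul_of_nonneg_left h' hk1.le
    have key : ((k:ℝ)+1) * ((1 - 1/((k:ℝ)+1)) * E) = (k:ℝ) * E := by
      first
      | (field_simp; ring)
      | field_simp
    rw [key, mul_one] at h''
    exact h''
  have hEpow : E ^ (k+1) = Real.exp 1 := by
    rw [hE, ← Real.exp_nat_mul]
    congr 1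
    push_cast
    field_simp
  calc (k:ℝ)^(k+1) * Real.exp 1 = ((k:ℝ) * E)^(k+1) := by
        rw [mul_pow, hEpow]
  _ ≤ ((k:ℝ)+1)^(k+1) := pow_le_pow_left₀ (by positivity) h2 _

private lemma fact_lb : ∀ k : ℕ, (k : ℝ) ^ k ≤ (Nat.factorial k : ℝ) * Real.exp k := by
  intro k
  induction k with
  | zero => simp
  | succ k ih =>
    rcases Nat.eq_zero_or_pos k with rfl | hk
    · simp [Nat.factorial]
    · have hk0 : (0:ℝ) ≤ k := by positivity
      have h := key_ratio k hk
      push_cast [Nat.factorial_succ, pow_succ, Real.exp_add]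
      calc ((k:ℝ)+1)^k * ((k:ℝ)+1)
          ≤ ((k:ℝ)^k * Real.exp 1) * ((k:ℝ)+1) := by
            apply mul_le_mul_of_nonneg_right h (by positivity)
      _ ≤ ((Nat.factorial k : ℝ) * Real.exp k * Real.exp 1) * ((k:ℝ)+1) := by
            have := mul_le_mul_of_nonneg_right ih (Real.exp_pos 1).le
            apply mul_le_mul_of_nonneg_right _ (by positivity)
            exact this
      _ = ((k:ℝ)+1) * (Nat.factorial k : ℝ) * (Real.exp k * Real.exp 1) := by ring

private lemma fact_ub : ∀ k : ℕ, 1 ≤ k →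
    (Nat.factorial k : ℝ) * Real.exp k ≤ Real.exp 1 * (k : ℝ) ^ (k+1) := by
  intro k
  induction k with
  | zero => intro h; omega
  | succ k ih =>
    intro _
    rcases Nat.eq_zero_or_pos k with rfl | hk
    · simp [Nat.factorial]
    · have h2 := key_ratio2 k hk
      have ihk := ih hk
      push_cast [Nat.factorial_succ, Real.exp_add]
      calc ((k:ℝ)+1) * (Nat.factorial k : ℝ) * (Real.exp k * Real.exp 1)
          = ((Nat.factorial k : ℝ) * Real.exp k) * (((k:ℝ)+1) * Real.exp 1) := by ring
      _ ≤ (Real.exp 1 * (k:ℝ)^(k+1)) * (((k:ℝ)+1) * Real.exp 1) := by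
            apply mul_le_mul_of_nonneg_right ihk (by positivity)
      _ = (((k:ℝ)^(k+1) * Real.exp 1) * ((k:ℝ)+1)) * Real.exp 1 := by ring
      _ ≤ ((((k:ℝ)+1)^(k+1)) * ((k:ℝ)+1)) * Real.exp 1 := by
            apply mul_le_mul_of_nonneg_right _ (Real.exp_pos 1).le
            exact mul_le_mul_of_nonneg_right h2 (by positivity)
      _ = Real.exp 1 * ((k:ℝ)+1)^(k+1+1) := by ring

private lemma log_fact_lb (k : ℕ) (hk : 1 ≤ k) :
    (k:ℝ) * Real.log k - k ≤ Real.log (Nat.factorial k) := by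
  have hk0 : (0:ℝ) < k := by exact_mod_cast hk
  have hf : (0:ℝ) < (Nat.factorial k : ℝ) := by exact_mod_cast k.factorial_pos
  have h := Real.log_le_log (by positivity) (fact_lb k)
  rw [Real.log_pow, Real.log_mul hf.ne' (Real.exp_pos _).ne', Real.log_exp] at h
  linarith

private lemma log_fact_ub (k : ℕ) (hk : 1 ≤ k) :
    Real.log (Nat.factorial k) ≤ ((k:ℝ)+1) * Real.log k - k + 1 := by
  have hk0 : (0:ℝ) < k := by exact_mod_cast hk
  have hf : (0:ℝ) < (Nat.factorial k : ℝ) := by exact_mod_cast k.factorial_pos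
  have h := Real.log_le_log (by positivity) (fact_ub k hk)
  rw [Real.log_mul hf.ne' (Real.exp_pos _).ne', Real.log_exp,
    Real.log_mul (Real.exp_pos _).ne' (by positivity), Real.log_exp, Real.log_pow] at h
  push_cast at h
  linarith

/-- Lower bound of Lemma 1: `log₂(n!/(c₁!⋯c_σ!)) ≥ nH − σ·log₂(n/σ) − 2σ`, where
`H` is the entropy of the distribution `(c₁/n, …, c_σ/n)`. -/
theorem log_multinomial_lower (n σ : ℕ) (hn : 1 ≤ n) (c : Fin σ → ℕ)
    (hpos : ∀ j, 0 < c j) (hsum : ∑ j, c j = n) (H : ℝ)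
    (hH : H = ∑ j, ((c j : ℝ) / n) * Real.logb 2 ((n : ℝ) / (c j))) :
    (n : ℝ) * H - σ * Real.logb 2 ((n : ℝ) / σ) - 2 * σ ≤
      Real.logb 2 ((Nat.factorial n : ℝ) / ∏ j, (Nat.factorial (c j) : ℝ)) := by
  have hσ : 0 < σ := by
    rcases Nat.eq_zero_or_pos σ with rfl | h
    · simp at hsum; omega
    · exact h
  have hσ0 : (0:ℝ) < σ := by exact_mod_cast hσ
  have hn0 : (0:ℝ) < n := by exact_mod_cast hn
  have hc0 : ∀ j, (0:ℝ) < (c j : ℝ) := fun j => by exact_mod_cast hpos j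
  have hP : (0:ℝ) < ∏ j, (Nat.factorial (c j) : ℝ) := by
    apply Finset.prod_pos
    intro j _
    exact_mod_cast (c j).factorial_pos
  have hNf : (0:ℝ) < (Nat.factorial n : ℝ) := by exact_mod_cast n.factorial_pos
  have hlog2 : (0:ℝ) < Real.log 2 := Real.log_pos (by norm_num)
  conv_rhs => rw [Real.logb]
  rw [le_div_iff₀ hlog2]
  rw [Real.log_div hNf.ne' hP.ne', Real.log_prod (fun j _ => by
    have := (c j).factorial_pos
    positivity)]
  -- key identities turning logb into log
  have hcs : ∑ j, (c j : ℝ) = (n:ℝ) := by exact_mod_cast hsum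
  have hHlog : (n:ℝ) * H * Real.log 2
      = (n:ℝ) * Real.log n - ∑ j, (c j : ℝ) * Real.log (c j) := by
    rw [hH, Finset.mul_sum, Finset.sum_mul]
    have hterm : ∀ j ∈ Finset.univ, (n:ℝ) * ((c j : ℝ)/n * Real.logb 2 ((n:ℝ)/(c j)))
        * Real.log 2 = (c j : ℝ) * Real.log n - (c j : ℝ) * Real.log (c j) := by
      intro j _
      rw [Real.logb, Real.log_div hn0.ne' (hc0 j).ne']
      field_simp
    rw [Finset.sum_congr rfl hterm, Finset.sum_sub_distrib, ← Finset.sum_mul, hcs]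
  have hσlog : (σ:ℝ) * Real.logb 2 ((n:ℝ)/σ) * Real.log 2 = (σ:ℝ) * Real.log ((n:ℝ)/σ) := by
    rw [Real.logb]
    field_simp
  -- Jensen: ∑ log cⱼ ≤ σ log (n/σ)
  have hjensen : ∑ j, Real.log (c j) ≤ (σ:ℝ) * Real.log ((n:ℝ)/σ) := by
    have hconc := strictConcaveOn_log_Ioi.concaveOn
    have h := hconc.le_map_sum (t := Finset.univ) (w := fun _ : Fin σ => 1/(σ:ℝ))
      (p := fun j => (c j : ℝ)) (fun i _ => by positivity)
      (by rw [Finset.sum_const]; simp; field_simp)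
      (fun i _ => Set.mem_Ioi.mpr (hc0 i))
    simp only [smul_eq_mul] at h
    have hsum' : ∑ j, 1/(σ:ℝ) * (c j : ℝ) = (n:ℝ)/σ := by
      rw [← Finset.mul_sum]
      have : ∑ j, (c j : ℝ) = (n:ℝ) := by norm_cast
      rw [this]; ring
    rw [hsum'] at h
    have := mul_le_mul_of_nonneg_left h hσ0.le
    rw [Finset.mul_sum] at this
    calc ∑ j, Real.log (c j) = ∑ j, (σ:ℝ) * (1/(σ:ℝ) * Real.log (c j)) := by
          apply Finset.sum_congr rfl
          intro j _
          field_simp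
    _ ≤ (σ:ℝ) * Real.log ((n:ℝ)/σ) := this
  -- factorial bounds
  have h1 : (n:ℝ) * Real.log n - n ≤ Real.log (Nat.factorial n) := log_fact_lb n hn
  have h2 : ∑ j, Real.log (Nat.factorial (c j))
      ≤ ∑ j, (c j : ℝ) * Real.log (c j) + ∑ j, Real.log (c j) - (n:ℝ) + σ := by
    calc ∑ j, Real.log (Nat.factorial (c j))
        ≤ ∑ j, (((c j : ℝ)+1) * Real.log (c j) - (c j : ℝ) + 1) :=
          Finset.sum_le_sum fun j _ => log_fact_ub (c j) (hpos j)
    _ = ∑ j, (c j : ℝ) * Real.log (c j) + ∑ j, Real.log (c j) - (n:ℝ) + σ := by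
          have : ∑ j, (c j : ℝ) = (n:ℝ) := by norm_cast
          simp only [add_mul, one_mul]
          rw [Finset.sum_add_distrib, Finset.sum_sub_distrib, Finset.sum_add_distrib, this]
          simp [Finset.card_univ]
  have h4 : (σ:ℝ) ≤ 2 * σ * Real.log 2 := by
    nlinarith [Real.log_two_gt_d9, hσ0]
  -- combine
  have expand : ((n:ℝ) * H - σ * Real.logb 2 ((n:ℝ)/σ) - 2 * σ) * Real.log 2
      = (n:ℝ) * H * Real.log 2 - (σ:ℝ) * Real.logb 2 ((n:ℝ)/σ) * Real.log 2
        - 2 * σ * Real.log 2 := by ring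
  rw [expand, hHlog, hσlog]
  linarith
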